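/- Let A be an N×N real matrix all of whose (complex) eigenvalues have absolute value greater than one, let C be an M×N real matrix with M < N such that the observability matrix (C; CA; …; CA^{N−1}) has rank N, and let 0 < p < 1. Suppose there exists a C¹ observer gain K : ℝ^M → ℝ^N with K(0)=0 such that the observer error dynamics e_{t+1} = A e_t − ξ_t·(K(C x_t) − K(C(x_t − e_t))), along x_{t+1} = A x_t, is MSE stable: there exist L < ∞, 0 < β < 1 with E_{ξ_0^t}[‖e_{t+1}‖²] ≤ L β^t ‖e_0‖² for all x_0, e_0 ∈ ℝ^N and t ≥ 0. Then (1−p)^M · (det A)² < 1; equivalently, (1−p)^M · (∏_{k=1}^N |λ_k|)² < 1 where λ_1,…,λ_N are the eigenvalues of A. -/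

import Mathlib

open Matrix Polynomial

noncomputable section

abbrev Euc (n : ℕ) := EuclideanSpace ℝ (Fin n)

/-- Expectation over i.i.d. Bernoulli(p) erasure prefixes (ξ_0,…,ξ_t). -/
def erasureExp (p : ℝ) (t : ℕ) (G : (ℕ → Bool) → ℝ) : ℝ :=
  ∑ s : Fin (t + 1) → Bool,
    (∏ i, if s i then p else 1 - p) *
      G (fun n => if h : n < t + 1 then s ⟨n, h⟩ else false)

variable {N M : ℕ}

/-- Observer error dynamics `e_{t+1} = A e_t − ξ_t (K(C x_t) − K(C(x_t − e_t)))`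
along `x_{t+1} = A x_t`. -/
def errSeqLin (A : Matrix (Fin N) (Fin N) ℝ) (C : Matrix (Fin M) (Fin N) ℝ)
    (K : Euc M → Euc N) (x0 e0 : Euc N) (ξ : ℕ → Bool) : ℕ → Euc N
  | 0 => e0
  | t + 1 =>
      toEuclideanLin A (errSeqLin A C K x0 e0 ξ t) -
        (if ξ t then (1 : ℝ) else 0) •
          (K (toEuclideanLin C (toEuclideanLin (A ^ t) x0)) -
            K (toEuclideanLin C
                (toEuclideanLin (A ^ t) x0 - errSeqLin A C K x0 e0 ξ t)))

/-! ### Auxiliary definitions -/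

/-- The step matrix of the linearized error dynamics. -/
def stepMat (A Ahat : Matrix (Fin N) (Fin N) ℝ) (b : Bool) : Matrix (Fin N) (Fin N) ℝ :=
  if b then Ahat else A

/-- Product of step matrices along an erasure pattern. -/
def obsProd (A Ahat : Matrix (Fin N) (Fin N) ℝ) (ξ : ℕ → Bool) : ℕ → Matrix (Fin N) (Fin N) ℝ
  | 0 => 1
  | t + 1 => stepMat A Ahat (ξ t) * obsProd A Ahat ξ t

/-- Second-moment matrix recursion. -/
def obsS (A Ahat : Matrix (Fin N) (Fin N) ℝ) (p : ℝ) : ℕ → Matrix (Fin N) (Fin N) ℝ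
  | 0 => 1
  | T + 1 => p • (Ahatᵀ * obsS A Ahat p T * Ahat) + (1 - p) • (Aᵀ * obsS A Ahat p T * A)

/-! ### Elementary facts -/

lemma dp_self_nonneg (v : Fin N → ℝ) : 0 ≤ v ⬝ᵥ v := by
  simpa [dotProduct, ← sq] using
    Finset.sum_nonneg (fun i (_ : i ∈ Finset.univ) => sq_nonneg (v i))

/-! ### Spectral helpers for real symmetric matrices -/

section SpectralHelper
variable {H : Matrix (Fin N) (Fin N) ℝ} (hH : H.IsHermitian)

lemma spec_UstarU : star (hH.eigenvectorUnitary : Matrix (Fin N) (Fin N) ℝ) *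
    (hH.eigenvectorUnitary : Matrix (Fin N) (Fin N) ℝ) = 1 :=
  Matrix.mem_unitaryGroup_iff'.mp (SetLike.coe_mem _)

lemma spec_UUstar : (hH.eigenvectorUnitary : Matrix (Fin N) (Fin N) ℝ) *
    star (hH.eigenvectorUnitary : Matrix (Fin N) (Fin N) ℝ) = 1 :=
  Matrix.mem_unitaryGroup_iff.mp (SetLike.coe_mem _)

lemma spec_decomp : H = (hH.eigenvectorUnitary : Matrix (Fin N) (Fin N) ℝ) *
    diagonal hH.eigenvalues * star (hH.eigenvectorUnitary : Matrix (Fin N) (Fin N) ℝ) := by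
  have := hH.spectral_theorem
  simpa [RCLike.ofReal_real_eq_id] using this

lemma spec_qf (v : Fin N → ℝ) :
    v ⬝ᵥ (H *ᵥ v) = ∑ i, hH.eigenvalues i *
      ((star (hH.eigenvectorUnitary : Matrix (Fin N) (Fin N) ℝ) *ᵥ v) i)^2 := by
  set w := star (hH.eigenvectorUnitary : Matrix (Fin N) (Fin N) ℝ) *ᵥ v with hw
  have hvecMul : v ᵥ* (hH.eigenvectorUnitary : Matrix (Fin N) (Fin N) ℝ) = w := by
    rw [hw, ← Matrix.vecMul_transpose, ← Matrix.conjTranspose_eq_transpose_of_trivial]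
    rfl
  conv_lhs => rw [spec_decomp hH]
  rw [← Matrix.mulVec_mulVec, ← Matrix.mulVec_mulVec, Matrix.dotProduct_mulVec, hvecMul]
  simp [dotProduct, Matrix.mulVec_diagonal, sq]
  ring_nf
  exact Finset.sum_congr rfl fun i _ => by ring

lemma spec_nsq (v : Fin N → ℝ) :
    v ⬝ᵥ v = ∑ i, ((star (hH.eigenvectorUnitary : Matrix (Fin N) (Fin N) ℝ) *ᵥ v) i)^2 := by
  set w := star (hH.eigenvectorUnitary : Matrix (Fin N) (Fin N) ℝ) *ᵥ v with hw
  have hvecMul : v ᵥ* (hH.eigenvectorUnitary : Matrix (Fin N) (Fin N) ℝ) = w := by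
    rw [hw, ← Matrix.vecMul_transpose, ← Matrix.conjTranspose_eq_transpose_of_trivial]
    rfl
  have h1 : v ⬝ᵥ v = v ⬝ᵥ (((hH.eigenvectorUnitary : Matrix (Fin N) (Fin N) ℝ) *
      star (hH.eigenvectorUnitary : Matrix (Fin N) (Fin N) ℝ)) *ᵥ v) := by
    rw [spec_UUstar hH]; simp
  rw [h1, ← Matrix.mulVec_mulVec, Matrix.dotProduct_mulVec, hvecMul]
  simp [dotProduct, sq]
  rfl

lemma spec_recover (v : Fin N → ℝ) :
    (hH.eigenvectorUnitary : Matrix (Fin N) (Fin N) ℝ) *ᵥ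
      (star (hH.eigenvectorUnitary : Matrix (Fin N) (Fin N) ℝ) *ᵥ v) = v := by
  rw [Matrix.mulVec_mulVec, spec_UUstar hH, Matrix.one_mulVec]

lemma spec_unit (i : Fin N) :
    star (hH.eigenvectorUnitary : Matrix (Fin N) (Fin N) ℝ) *ᵥ
      ((hH.eigenvectorUnitary : Matrix (Fin N) (Fin N) ℝ) *ᵥ (Pi.single i 1)) = Pi.single i 1 := by
  rw [Matrix.mulVec_mulVec, spec_UstarU hH, Matrix.one_mulVec]

lemma spec_det : H.det = ∏ i, hH.eigenvalues i := by
  simpa [RCLike.ofReal_real_eq_id] using hH.det_eq_prod_eigenvalues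

lemma spec_eig_lb {c : ℝ} (hb : ∀ v, c * (v ⬝ᵥ v) ≤ v ⬝ᵥ (H *ᵥ v)) (i : Fin N) :
    c ≤ hH.eigenvalues i := by
  set v := (hH.eigenvectorUnitary : Matrix (Fin N) (Fin N) ℝ) *ᵥ (Pi.single i 1) with hv
  have hw : star (hH.eigenvectorUnitary : Matrix (Fin N) (Fin N) ℝ) *ᵥ v = Pi.single i 1 :=
    spec_unit hH i
  have h1 : v ⬝ᵥ (H *ᵥ v) = hH.eigenvalues i := by
    rw [spec_qf hH v, hw]
    rw [Finset.sum_eq_single i] <;> simp +contextual [Pi.single_apply]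
  have h2 : v ⬝ᵥ v = 1 := by
    rw [spec_nsq hH v, hw]
    rw [Finset.sum_eq_single i] <;> simp +contextual [Pi.single_apply]
  have := hb v
  rw [h1, h2, mul_one] at this
  exact this

lemma spec_eig_ub {c : ℝ} (hb : ∀ v, v ⬝ᵥ (H *ᵥ v) ≤ c * (v ⬝ᵥ v)) (i : Fin N) :
    hH.eigenvalues i ≤ c := by
  set v := (hH.eigenvectorUnitary : Matrix (Fin N) (Fin N) ℝ) *ᵥ (Pi.single i 1) with hv
  have hw : star (hH.eigenvectorUnitary : Matrix (Fin N) (Fin N) ℝ) *ᵥ v = Pi.single i 1 :=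
    spec_unit hH i
  have h1 : v ⬝ᵥ (H *ᵥ v) = hH.eigenvalues i := by
    rw [spec_qf hH v, hw]
    rw [Finset.sum_eq_single i] <;> simp +contextual [Pi.single_apply]
  have h2 : v ⬝ᵥ v = 1 := by
    rw [spec_nsq hH v, hw]
    rw [Finset.sum_eq_single i] <;> simp +contextual [Pi.single_apply]
  have := hb v
  rw [h1, h2, mul_one] at this
  exact this

end SpectralHelper

/-- Upper bound on the determinant from quadratic form bounds. -/
lemma det_le_of_qf {H : Matrix (Fin N) (Fin N) ℝ} (hH : H.IsHermitian)
    (h0 : ∀ v, 0 ≤ v ⬝ᵥ (H *ᵥ v)) {c : ℝ} (hb : ∀ v, v ⬝ᵥ (H *ᵥ v) ≤ c * (v ⬝ᵥ v)) :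
    H.det ≤ c ^ N := by
  rw [spec_det hH]
  calc ∏ i, hH.eigenvalues i ≤ ∏ _i : Fin N, c := by
        apply Finset.prod_le_prod
        · intro i _
          exact spec_eig_lb hH (by simpa using h0) i
        · intro i _
          exact spec_eig_ub hH hb i
    _ = c ^ N := by simp

/-- Core determinant lemma: `det (p • GᵀG + q • 1) ≥ q^M` for `G = 1 - F*C`. -/
lemma core_det_lemma (p q : ℝ) (hp : 0 ≤ p) (hq0 : 0 < q) (hq1 : q ≤ 1) (hpq : p + q = 1)
    (F : Matrix (Fin N) (Fin M) ℝ) (Cm : Matrix (Fin M) (Fin N) ℝ) :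
    q ^ M ≤ Matrix.det (p • ((1 - F * Cm)ᵀ * (1 - F * Cm)) + q • (1 : Matrix (Fin N) (Fin N) ℝ)) := by
  set G : Matrix (Fin N) (Fin N) ℝ := 1 - F * Cm with hG
  set H : Matrix (Fin N) (Fin N) ℝ := p • (Gᵀ * G) + q • 1 with hHdef
  have hH : H.IsHermitian := by
    show Hᴴ = H
    simp [hHdef, Matrix.conjTranspose_add, Matrix.conjTranspose_smul,
      Matrix.conjTranspose_eq_transpose_of_trivial, Matrix.transpose_mul,
      Matrix.transpose_transpose]
  have hqf : ∀ v : Fin N → ℝ, v ⬝ᵥ (H *ᵥ v) = p * ((G *ᵥ v) ⬝ᵥ (G *ᵥ v)) + q * (v ⬝ᵥ v) := by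
    intro v
    rw [hHdef]
    rw [Matrix.add_mulVec, Matrix.smul_mulVec, Matrix.smul_mulVec,
      dotProduct_add, dotProduct_smul, dotProduct_smul,
      Matrix.one_mulVec, ← Matrix.mulVec_mulVec, Matrix.dotProduct_mulVec,
      ← Matrix.vecMul_transpose]
    simp [smul_eq_mul]
  have heig_q : ∀ i, q ≤ hH.eigenvalues i := by
    apply spec_eig_lb hH
    intro v
    rw [hqf v]
    have h1 : 0 ≤ p * ((G *ᵥ v) ⬝ᵥ (G *ᵥ v)) := mul_nonneg hp (dp_self_nonneg _)
    linarith [mul_comm q (v ⬝ᵥ v)]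
  classical
  set Sm : Finset (Fin N) := Finset.univ.filter (fun i => hH.eigenvalues i < 1) with hSm
  set V : Submodule ℝ (Fin N → ℝ) := LinearMap.ker (Cm.mulVecLin) with hV
  set θ : V →ₗ[ℝ] ({ i // i ∈ Finset.univ \ Sm } → ℝ) :=
    (LinearMap.funLeft ℝ ℝ Subtype.val).comp
      (((star (hH.eigenvectorUnitary : Matrix (Fin N) (Fin N) ℝ)).mulVecLin).comp V.subtype) with hθ
  have hθinj : Function.Injective θ := by
    rw [← LinearMap.ker_eq_bot]
    apply (Submodule.eq_bot_iff _).mpr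
    rintro ⟨v, hv⟩ hker
    simp only [LinearMap.mem_ker] at hker
    have hw0 : ∀ i, i ∉ Sm →
        (star (hH.eigenvectorUnitary : Matrix (Fin N) (Fin N) ℝ) *ᵥ v) i = 0 := by
      intro i hi
      have := congr_fun hker ⟨i, by simp [Finset.mem_sdiff, hi]⟩
      simpa [hθ, LinearMap.funLeft] using this
    have hGv : G *ᵥ v = v := by
      have hCv : Cm *ᵥ v = 0 := hv
      rw [hG, Matrix.sub_mulVec, Matrix.one_mulVec, ← Matrix.mulVec_mulVec, hCv]
      simp
    have hq1' : v ⬝ᵥ (H *ᵥ v) = v ⬝ᵥ v := by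
      rw [hqf v, hGv]; nlinarith [dp_self_nonneg v]
    by_contra hvne
    have hvne' : v ≠ 0 := by simpa using hvne
    set w := star (hH.eigenvectorUnitary : Matrix (Fin N) (Fin N) ℝ) *ᵥ v with hwdef
    have hwne : w ≠ 0 := by
      intro h0
      apply hvne'
      have := spec_recover hH v
      rw [← hwdef, h0] at this
      simpa [Matrix.mulVec_zero] using this.symm
    obtain ⟨i0, hi0⟩ : ∃ i, w i ≠ 0 := by
      by_contra hall; push_neg at hall; exact hwne (funext hall)
    have hi0Sm : i0 ∈ Sm := by
      by_contra hns; exact hi0 (hw0 i0 hns)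
    have hstrict : v ⬝ᵥ (H *ᵥ v) < v ⬝ᵥ v := by
      rw [spec_qf hH v, spec_nsq hH v, ← hwdef]
      apply Finset.sum_lt_sum
      · intro i _
        by_cases hiSm : i ∈ Sm
        · have hl : hH.eigenvalues i < 1 := by simpa [hSm] using hiSm
          nlinarith [sq_nonneg (w i), heig_q i]
        · rw [hw0 i hiSm]; simp
      · refine ⟨i0, Finset.mem_univ _, ?_⟩
        have hl : hH.eigenvalues i0 < 1 := by simpa [hSm] using hi0Sm
        have : 0 < (w i0)^2 := by positivity
        nlinarith
    rw [hq1'] at hstrict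
    exact lt_irrefl _ hstrict
  have hcard : Sm.card ≤ M := by
    have h1 : Module.finrank ℝ V ≤ Module.finrank ℝ ({ i // i ∈ Finset.univ \ Sm } → ℝ) :=
      LinearMap.finrank_le_finrank_of_injective hθinj
    have h2 : Module.finrank ℝ ({ i // i ∈ Finset.univ \ Sm } → ℝ) = N - Sm.card := by
      simp [Module.finrank_pi]
    have h3 : Module.finrank ℝ (LinearMap.range Cm.mulVecLin) + Module.finrank ℝ V = N := by
      have := LinearMap.finrank_range_add_finrank_ker (Cm.mulVecLin)
      simpa [hV] using this
    have h4 : Module.finrank ℝ (LinearMap.range Cm.mulVecLin) ≤ M := by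
      have := Submodule.finrank_le (LinearMap.range Cm.mulVecLin)
      simpa using this
    have h6 : Sm.card ≤ N := by
      simpa using Finset.card_le_card (Finset.subset_univ Sm)
    omega
  rw [spec_det hH]
  calc q ^ M ≤ q ^ Sm.card := pow_le_pow_of_le_one hq0.le hq1 hcard
    _ = ∏ i ∈ Finset.univ, (if i ∈ Sm then q else 1) := by
        rw [Finset.prod_ite_mem, Finset.univ_inter, Finset.prod_const]
    _ ≤ ∏ i, hH.eigenvalues i := by
        apply Finset.prod_le_prod
        · intro i _; positivity
        · intro i _
          by_cases hiSm : i ∈ Sm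
          · simpa [hiSm] using heig_q i
          · have : ¬ hH.eigenvalues i < 1 := by simpa [hSm] using hiSm
            simpa [hiSm] using not_lt.mp this

/-- Positive definiteness is preserved by congruence with an invertible matrix. -/
lemma congr_posdef {A S : Matrix (Fin N) (Fin N) ℝ} (hA : IsUnit A.det) (hS : S.PosDef) :
    (Aᵀ * S * A).PosDef := by
  rw [Matrix.posDef_iff_dotProduct_mulVec]
  constructor
  · have hps := hS.posSemidef.conjTranspose_mul_mul_same (B := A)
    simpa [Matrix.conjTranspose_eq_transpose_of_trivial] using hps.1
  · intro x hx
    have hx' : A *ᵥ x ≠ 0 := by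
      intro h
      exact hx (Matrix.mulVec_injective_iff_isUnit.mpr ((Matrix.isUnit_iff_isUnit_det _).mpr hA)
        (by simpa using h))
    have hpos := hS.dotProduct_mulVec_pos hx'
    have heq : star x ⬝ᵥ ((Aᵀ * S * A) *ᵥ x) = star (A *ᵥ x) ⬝ᵥ (S *ᵥ (A *ᵥ x)) := by
      simp only [star_trivial]
      rw [← Matrix.mulVec_mulVec, ← Matrix.mulVec_mulVec,
        Matrix.dotProduct_mulVec, Matrix.vecMul_transpose]
    rw [heq]
    exact hpos

lemma congr_psd {S : Matrix (Fin N) (Fin N) ℝ} (hS : S.PosSemidef)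
    (X : Matrix (Fin N) (Fin N) ℝ) : (Xᵀ * S * X).PosSemidef := by
  have hps := hS.conjTranspose_mul_mul_same (B := X)
  rwa [Matrix.conjTranspose_eq_transpose_of_trivial] at hps

lemma psd_smul {S : Matrix (Fin N) (Fin N) ℝ} (hS : S.PosSemidef) {c : ℝ} (hc : 0 ≤ c) :
    (c • S).PosSemidef := by
  rw [Matrix.posSemidef_iff_dotProduct_mulVec]
  constructor
  · show _ᴴ = _
    rw [Matrix.conjTranspose_smul, star_trivial, hS.1]
  · intro x
    rw [Matrix.smul_mulVec, dotProduct_smul]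
    exact smul_nonneg hc (hS.dotProduct_mulVec_nonneg x)

lemma posdef_smul {S : Matrix (Fin N) (Fin N) ℝ} (hS : S.PosDef) {c : ℝ} (hc : 0 < c) :
    (c • S).PosDef := by
  rw [Matrix.posDef_iff_dotProduct_mulVec]
  constructor
  · show _ᴴ = _
    rw [Matrix.conjTranspose_smul, star_trivial, hS.1]
  · intro x hx
    rw [Matrix.smul_mulVec, dotProduct_smul]
    exact smul_pos hc (hS.dotProduct_mulVec_pos hx)

open scoped MatrixOrder in
/-- One-step determinant inequality. -/
lemma det_step (p q : ℝ) (hp : 0 ≤ p) (hq0 : 0 < q) (hq1 : q ≤ 1) (hpq : p + q = 1)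
    (A : Matrix (Fin N) (Fin N) ℝ) (hA : IsUnit A.det)
    (Bm : Matrix (Fin N) (Fin M) ℝ) (Cm : Matrix (Fin M) (Fin N) ℝ)
    (S : Matrix (Fin N) (Fin N) ℝ) (hS : S.PosDef) :
    q ^ M * (A.det ^ 2 * S.det) ≤
      (p • ((A - Bm * Cm)ᵀ * S * (A - Bm * Cm)) + q • (Aᵀ * S * A)).det := by
  classical
  set T' : Matrix (Fin N) (Fin N) ℝ := Aᵀ * S * A with hT'def
  have hT' : T'.PosDef := congr_posdef hA hS
  set R : Matrix (Fin N) (Fin N) ℝ := CFC.sqrt T' with hRdef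
  have hRR : R * R = T' := CFC.sqrt_mul_sqrt_self T' hT'.posSemidef.nonneg
  have hRherm : Rᵀ = R := by
    rw [← Matrix.conjTranspose_eq_transpose_of_trivial R]
    exact (Matrix.nonneg_iff_posSemidef.mp (CFC.sqrt_nonneg T')).1
  have hdetT'pos : 0 < T'.det := hT'.det_pos
  have hdetRR : R.det * R.det = T'.det := by rw [← Matrix.det_mul, hRR]
  have hdetRunit : IsUnit R.det := by
    rw [isUnit_iff_ne_zero]
    intro h
    rw [h, mul_zero] at hdetRR
    exact absurd hdetRR.symm (ne_of_gt hdetT'pos)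
  have e1 : R⁻¹ * R = 1 := Matrix.nonsing_inv_mul R hdetRunit
  have e2 : R * R⁻¹ = 1 := Matrix.mul_nonsing_inv R hdetRunit
  have hAAinv : A * A⁻¹ = 1 := Matrix.mul_nonsing_inv A hA
  set F0 : Matrix (Fin N) (Fin M) ℝ := A⁻¹ * Bm with hF0def
  set X : Matrix (Fin N) (Fin N) ℝ := 1 - F0 * Cm with hXdef
  have hAX : A * X = A - Bm * Cm := by
    rw [hXdef, Matrix.mul_sub, Matrix.mul_one, hF0def, ← Matrix.mul_assoc,
      ← Matrix.mul_assoc, hAAinv, Matrix.one_mul]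
  have identity1 : (A - Bm * Cm)ᵀ * S * (A - Bm * Cm) = Xᵀ * T' * X := by
    rw [← hAX, Matrix.transpose_mul]
    simp only [hT'def, Matrix.mul_assoc]
  set G : Matrix (Fin N) (Fin N) ℝ := R * X * R⁻¹ with hGdef
  have hGT : Gᵀ = R⁻¹ * (Xᵀ * R) := by
    rw [hGdef, Matrix.transpose_mul, Matrix.transpose_mul, Matrix.transpose_nonsing_inv,
      hRherm]
  have hcong : R * (Gᵀ * G) * R = Xᵀ * T' * X := by
    rw [hGT, hGdef, ← hRR]
    simp only [Matrix.mul_assoc, e1, Matrix.mul_one]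
    simp only [← Matrix.mul_assoc, e2, Matrix.one_mul]
  set W : Matrix (Fin N) (Fin N) ℝ := p • (Gᵀ * G) + q • 1 with hWdef
  have identity2 : p • (Xᵀ * T' * X) + q • T' = R * W * R := by
    rw [hWdef, Matrix.mul_add, Matrix.add_mul, Matrix.mul_smul, Matrix.smul_mul,
      Matrix.mul_smul, Matrix.smul_mul, Matrix.mul_one, hRR, hcong]
  have hGform : G = 1 - (R * F0) * (Cm * R⁻¹) := by
    rw [hGdef, hXdef, Matrix.mul_sub, Matrix.mul_one, Matrix.sub_mul, e2]
    simp only [Matrix.mul_assoc]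
  have hcore : q ^ M ≤ W.det := by
    have := core_det_lemma p q hp hq0 hq1 hpq (R * F0) (Cm * R⁻¹)
    rwa [← hGform, ← hWdef] at this
  have hdet : (p • ((A - Bm * Cm)ᵀ * S * (A - Bm * Cm)) + q • (Aᵀ * S * A)).det
      = T'.det * W.det := by
    rw [identity1, ← hT'def, identity2, Matrix.det_mul, Matrix.det_mul]
    ring_nf
    rw [← hdetRR]
    ring
  rw [hdet]
  have hdetT'eq : T'.det = A.det ^ 2 * S.det := by
    rw [hT'def, Matrix.det_mul, Matrix.det_mul, Matrix.det_transpose]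
    ring
  rw [hdetT'eq]
  calc q ^ M * (A.det ^ 2 * S.det) ≤ W.det * (A.det ^ 2 * S.det) := by
        apply mul_le_mul_of_nonneg_right hcore
        rw [← hdetT'eq]; exact hdetT'pos.le
    _ = A.det ^ 2 * S.det * W.det := by ring

/-! ### Properties of the matrix recursions -/

lemma obsProd_congr (A Ahat : Matrix (Fin N) (Fin N) ℝ) {ξ ξ' : ℕ → Bool} (t : ℕ)
    (h : ∀ i < t, ξ i = ξ' i) : obsProd A Ahat ξ t = obsProd A Ahat ξ' t := by
  induction t with
  | zero => rfl
  | succ t ih =>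
    simp only [obsProd, h t (Nat.lt_succ_self t),
      ih (fun i hi => h i (hi.trans (Nat.lt_succ_self t)))]

lemma obsProd_shift (A Ahat : Matrix (Fin N) (Fin N) ℝ) (ξ : ℕ → Bool) (t : ℕ) :
    obsProd A Ahat ξ (t + 1) = obsProd A Ahat (fun n => ξ (n + 1)) t * stepMat A Ahat (ξ 0) := by
  induction t with
  | zero => simp [obsProd]
  | succ t ih =>
    show stepMat A Ahat (ξ (t+1)) * obsProd A Ahat ξ (t+1) = _
    rw [ih]
    show _ = stepMat A Ahat (ξ (t+1)) * obsProd A Ahat (fun n => ξ (n+1)) t * stepMat A Ahat (ξ 0)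
    rw [Matrix.mul_assoc]

lemma obsS_symm (A Ahat : Matrix (Fin N) (Fin N) ℝ) (p : ℝ) (T : ℕ) :
    (obsS A Ahat p T)ᵀ = obsS A Ahat p T := by
  induction T with
  | zero => simp [obsS]
  | succ T ih =>
    show (p • (Ahatᵀ * obsS A Ahat p T * Ahat) + (1 - p) • (Aᵀ * obsS A Ahat p T * A))ᵀ = _
    rw [Matrix.transpose_add, Matrix.transpose_smul, Matrix.transpose_smul,
      Matrix.transpose_mul, Matrix.transpose_mul, Matrix.transpose_transpose,
      Matrix.transpose_mul, Matrix.transpose_mul, Matrix.transpose_transpose, ih]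
    show _ = p • (Ahatᵀ * obsS A Ahat p T * Ahat) + (1 - p) • (Aᵀ * obsS A Ahat p T * A)
    rw [Matrix.mul_assoc, Matrix.mul_assoc]

lemma obsS_herm (A Ahat : Matrix (Fin N) (Fin N) ℝ) (p : ℝ) (T : ℕ) :
    (obsS A Ahat p T).IsHermitian := by
  show _ᴴ = _
  rw [Matrix.conjTranspose_eq_transpose_of_trivial]
  exact obsS_symm A Ahat p T

lemma obsS_posdef (A Ahat : Matrix (Fin N) (Fin N) ℝ) {p : ℝ} (hp : 0 ≤ p) (hp1 : p < 1)
    (hA : IsUnit A.det) (T : ℕ) : (obsS A Ahat p T).PosDef := by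
  induction T with
  | zero => exact Matrix.PosDef.one
  | succ T ih =>
    show (p • (Ahatᵀ * obsS A Ahat p T * Ahat) + (1 - p) • (Aᵀ * obsS A Ahat p T * A)).PosDef
    exact Matrix.PosDef.posSemidef_add
      (psd_smul (congr_psd ih.posSemidef Ahat) hp)
      (posdef_smul (congr_posdef hA ih) (by linarith))

/-- Quadratic form of `obsS` as an expectation over patterns. -/
lemma sumQ (A Ahat : Matrix (Fin N) (Fin N) ℝ) (p : ℝ) (T : ℕ) (v : Fin N → ℝ) :
    ∑ s : Fin T → Bool, (∏ i, if s i then p else 1 - p) *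
      ((obsProd A Ahat (fun n => if h : n < T then s ⟨n, h⟩ else false) T *ᵥ v) ⬝ᵥ
       (obsProd A Ahat (fun n => if h : n < T then s ⟨n, h⟩ else false) T *ᵥ v))
    = v ⬝ᵥ (obsS A Ahat p T *ᵥ v) := by
  induction T generalizing v with
  | zero =>
    rw [Fintype.sum_unique]
    show (1 : ℝ) * _ = _
    simp [obsProd, obsS]
  | succ T ih =>
    rw [← Fintype.sum_equiv (Fin.consEquiv (fun _ => Bool))
      (fun x => (∏ i, if (Fin.consEquiv (fun _ => Bool) x) i then p else 1 - p) *
        ((obsProd A Ahat (fun n => if h : n < T + 1 then (Fin.consEquiv (fun _ => Bool) x) ⟨n, h⟩ else false) (T+1) *ᵥ v) ⬝ᵥ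
         (obsProd A Ahat (fun n => if h : n < T + 1 then (Fin.consEquiv (fun _ => Bool) x) ⟨n, h⟩ else false) (T+1) *ᵥ v)))
      _ (fun x => rfl)]
    rw [Fintype.sum_prod_type]
    have hterm : ∀ (b : Bool) (s' : Fin T → Bool),
        (∏ i, if (Fin.consEquiv (fun _ => Bool) (b, s')) i then p else 1 - p) *
        ((obsProd A Ahat (fun n => if h : n < T + 1 then (Fin.consEquiv (fun _ => Bool) (b, s')) ⟨n, h⟩ else false) (T+1) *ᵥ v) ⬝ᵥ
         (obsProd A Ahat (fun n => if h : n < T + 1 then (Fin.consEquiv (fun _ => Bool) (b, s')) ⟨n, h⟩ else false) (T+1) *ᵥ v))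
        = (if b then p else 1 - p) * ((∏ i, if s' i then p else 1 - p) *
          ((obsProd A Ahat (fun n => if h : n < T then s' ⟨n, h⟩ else false) T *ᵥ (stepMat A Ahat b *ᵥ v)) ⬝ᵥ
           (obsProd A Ahat (fun n => if h : n < T then s' ⟨n, h⟩ else false) T *ᵥ (stepMat A Ahat b *ᵥ v)))) := by
      intro b s'
      have hw : (∏ i, if (Fin.consEquiv (fun _ => Bool) (b, s')) i then p else 1 - p)
          = (if b then p else 1 - p) * ∏ i, if s' i then p else 1 - p := by
        show (∏ i : Fin (T+1), if (Fin.cons b s' : Fin (T+1) → Bool) i then p else 1 - p) = _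
        rw [Fin.prod_univ_succ]
        simp [Fin.cons_zero, Fin.cons_succ]
      have hP : obsProd A Ahat (fun n => if h : n < T + 1 then (Fin.consEquiv (fun _ => Bool) (b, s')) ⟨n, h⟩ else false) (T+1)
          = obsProd A Ahat (fun n => if h : n < T then s' ⟨n, h⟩ else false) T * stepMat A Ahat b := by
        rw [obsProd_shift]
        congr 1
        · apply obsProd_congr
          intro i hi
          show (if h : i + 1 < T + 1 then (Fin.cons b s' : Fin (T+1) → Bool) ⟨i + 1, h⟩ else false)
              = (if h : i < T then s' ⟨i, h⟩ else false)
          rw [dif_pos (Nat.succ_lt_succ hi), dif_pos hi]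
          show (Fin.cons b s' : Fin (T+1) → Bool) (⟨i, hi⟩ : Fin T).succ = s' ⟨i, hi⟩
          rw [Fin.cons_succ]
      rw [hw, hP, ← Matrix.mulVec_mulVec]
      ring
    calc ∑ b : Bool, ∑ s' : Fin T → Bool, _ = _ := by
          apply Finset.sum_congr rfl
          intro b _
          apply Finset.sum_congr rfl
          intro s' _
          exact hterm b s'
      _ = ∑ b : Bool, (if b then p else 1 - p) *
            ((stepMat A Ahat b *ᵥ v) ⬝ᵥ (obsS A Ahat p T *ᵥ (stepMat A Ahat b *ᵥ v))) := by
          apply Finset.sum_congr rfl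
          intro b _
          rw [← Finset.mul_sum, ih (stepMat A Ahat b *ᵥ v)]
      _ = v ⬝ᵥ (obsS A Ahat p (T+1) *ᵥ v) := by
          rw [Fintype.sum_bool]
          show p * ((Ahat *ᵥ v) ⬝ᵥ (obsS A Ahat p T *ᵥ (Ahat *ᵥ v)))
              + (1-p) * ((A *ᵥ v) ⬝ᵥ (obsS A Ahat p T *ᵥ (A *ᵥ v)))
              = v ⬝ᵥ ((p • (Ahatᵀ * obsS A Ahat p T * Ahat) + (1 - p) • (Aᵀ * obsS A Ahat p T * A)) *ᵥ v)
          rw [Matrix.add_mulVec, Matrix.smul_mulVec, Matrix.smul_mulVec,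
            dotProduct_add, dotProduct_smul, dotProduct_smul]
          have hgen : ∀ (X S : Matrix (Fin N) (Fin N) ℝ),
              v ⬝ᵥ ((Xᵀ * S * X) *ᵥ v) = (X *ᵥ v) ⬝ᵥ (S *ᵥ (X *ᵥ v)) := by
            intro X S
            rw [← Matrix.mulVec_mulVec, ← Matrix.mulVec_mulVec,
              Matrix.dotProduct_mulVec, Matrix.vecMul_transpose]
          rw [hgen Ahat, hgen A]
          simp [smul_eq_mul]

/-! ### Linearization of the error dynamics -/

lemma errSeqLin_zero (A : Matrix (Fin N) (Fin N) ℝ) (C : Matrix (Fin M) (Fin N) ℝ)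
    (K : Euc M → Euc N) (hK0 : K 0 = 0) (ξ : ℕ → Bool) (t : ℕ) :
    errSeqLin A C K 0 0 ξ t = 0 := by
  induction t with
  | zero => rfl
  | succ t ih =>
    show toEuclideanLin A (errSeqLin A C K 0 0 ξ t) -
        (if ξ t then (1 : ℝ) else 0) •
          (K (toEuclideanLin C (toEuclideanLin (A ^ t) 0)) -
            K (toEuclideanLin C (toEuclideanLin (A ^ t) 0 - errSeqLin A C K 0 0 ξ t))) = 0
    rw [ih]
    simp [hK0]

lemma errSeqLin_hasFDerivAt (A : Matrix (Fin N) (Fin N) ℝ) (C : Matrix (Fin M) (Fin N) ℝ)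
    (K : Euc M → Euc N) (hK : ContDiff ℝ 1 K) (hK0 : K 0 = 0) (ξ : ℕ → Bool) (t : ℕ) :
    HasFDerivAt (fun e0 => errSeqLin A C K 0 e0 ξ t)
      (LinearMap.toContinuousLinearMap (Matrix.toEuclideanLin
        (obsProd A (A - (Matrix.toEuclideanLin.symm ((fderiv ℝ K 0) : Euc M →ₗ[ℝ] Euc N)) * C) ξ t)))
      0 := by
  set Bm : Matrix (Fin N) (Fin M) ℝ :=
    Matrix.toEuclideanLin.symm ((fderiv ℝ K 0) : Euc M →ₗ[ℝ] Euc N) with hBm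
  set Ahat : Matrix (Fin N) (Fin N) ℝ := A - Bm * C with hAhat
  induction t with
  | zero =>
    have : (LinearMap.toContinuousLinearMap (Matrix.toEuclideanLin
        (obsProd A Ahat ξ 0))) = ContinuousLinearMap.id ℝ (Euc N) := by
      apply ContinuousLinearMap.ext
      intro v
      show Matrix.toEuclideanLin (1 : Matrix (Fin N) (Fin N) ℝ) v = v
      ext i
      show ((1 : Matrix (Fin N) (Fin N) ℝ) *ᵥ (v : Fin N → ℝ)) i = v i
      rw [Matrix.one_mulVec]
    rw [this]
    exact hasFDerivAt_id 0
  | succ t ih =>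
    set D := LinearMap.toContinuousLinearMap (Matrix.toEuclideanLin (obsProd A Ahat ξ t)) with hD
    set clmA := LinearMap.toContinuousLinearMap (Matrix.toEuclideanLin A) with hclmA
    set clmC := LinearMap.toContinuousLinearMap (Matrix.toEuclideanLin C) with hclmC
    set B := fderiv ℝ K 0 with hB
    have herr0 : errSeqLin A C K 0 0 ξ t = 0 := errSeqLin_zero A C K hK0 ξ t
    have hinner : HasFDerivAt (fun e0 : Euc N => toEuclideanLin (A ^ t) 0 - errSeqLin A C K 0 e0 ξ t)
        ((0 : Euc N →L[ℝ] Euc N) - D) 0 := (hasFDerivAt_const _ _).sub ih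
    have hCin : HasFDerivAt
        (fun e0 : Euc N => toEuclideanLin C (toEuclideanLin (A ^ t) 0 - errSeqLin A C K 0 e0 ξ t))
        (clmC.comp ((0 : Euc N →L[ℝ] Euc N) - D)) 0 := clmC.hasFDerivAt.comp 0 hinner
    have hval : (fun e0 : Euc N => toEuclideanLin C (toEuclideanLin (A ^ t) 0 - errSeqLin A C K 0 e0 ξ t)) 0 = 0 := by
      simp [herr0]
    have hKd : HasFDerivAt K B 0 := ((hK.differentiable one_ne_zero) 0).hasFDerivAt
    have hKd' : HasFDerivAt K B
        ((fun e0 : Euc N => toEuclideanLin C (toEuclideanLin (A ^ t) 0 - errSeqLin A C K 0 e0 ξ t)) 0) := by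
      rw [hval]; exact hKd
    have hKcomp : HasFDerivAt
        (fun e0 : Euc N => K (toEuclideanLin C (toEuclideanLin (A ^ t) 0 - errSeqLin A C K 0 e0 ξ t)))
        (B.comp (clmC.comp ((0 : Euc N →L[ℝ] Euc N) - D))) 0 := hKd'.comp 0 hCin
    have hbr : HasFDerivAt
        (fun e0 : Euc N => K (toEuclideanLin C (toEuclideanLin (A ^ t) 0)) -
          K (toEuclideanLin C (toEuclideanLin (A ^ t) 0 - errSeqLin A C K 0 e0 ξ t)))
        ((0 : Euc N →L[ℝ] Euc N) - B.comp (clmC.comp ((0 : Euc N →L[ℝ] Euc N) - D))) 0 :=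
      (hasFDerivAt_const _ _).sub hKcomp
    have hsm := hbr.const_smul (if ξ t then (1:ℝ) else 0)
    have hAc : HasFDerivAt (fun e0 : Euc N => toEuclideanLin A (errSeqLin A C K 0 e0 ξ t))
        (clmA.comp D) 0 := clmA.hasFDerivAt.comp 0 ih
    have htot := hAc.sub hsm
    have hDeq : clmA.comp D - (if ξ t then (1:ℝ) else 0) •
          ((0 : Euc N →L[ℝ] Euc N) - B.comp (clmC.comp ((0 : Euc N →L[ℝ] Euc N) - D)))
        = LinearMap.toContinuousLinearMap (Matrix.toEuclideanLin (obsProd A Ahat ξ (t+1))) := by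
      apply ContinuousLinearMap.ext
      intro v
      simp only [ContinuousLinearMap.sub_apply, ContinuousLinearMap.smul_apply,
        ContinuousLinearMap.comp_apply, ContinuousLinearMap.zero_apply,
        LinearMap.coe_toContinuousLinearMap]
      have hBapp : ∀ x : Euc M, B x = Matrix.toEuclideanLin Bm x := by
        intro x
        rw [hBm, LinearEquiv.apply_symm_apply]
        rfl
      rw [hBapp]
      cases hb : ξ t with
      | false =>
        rw [if_neg (by simp)]
        show toEuclideanLin A (toEuclideanLin (obsProd A Ahat ξ t) v) - (0:ℝ) • _
            = toEuclideanLin (obsProd A Ahat ξ (t+1)) v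
        rw [zero_smul, sub_zero]
        show toEuclideanLin A (toEuclideanLin (obsProd A Ahat ξ t) v)
            = toEuclideanLin (stepMat A Ahat (ξ t) * obsProd A Ahat ξ t) v
        rw [hb]
        ext i
        show (A *ᵥ ((obsProd A Ahat ξ t) *ᵥ (v : Fin N → ℝ))) i
            = ((stepMat A Ahat false * obsProd A Ahat ξ t) *ᵥ (v : Fin N → ℝ)) i
        rw [Matrix.mulVec_mulVec]
        rfl
      | true =>
        rw [if_pos rfl, one_smul]
        show toEuclideanLin A (toEuclideanLin (obsProd A Ahat ξ t) v) -
            ((0 : Euc N) - toEuclideanLin Bm (toEuclideanLin C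
              ((0 : Euc N) - toEuclideanLin (obsProd A Ahat ξ t) v)))
            = toEuclideanLin (stepMat A Ahat (ξ t) * obsProd A Ahat ξ t) v
        rw [hb]
        ext i
        show (A *ᵥ (obsProd A Ahat ξ t *ᵥ (v : Fin N → ℝ))) i -
            ((0 : Fin N → ℝ) - Bm *ᵥ (C *ᵥ ((0 : Fin N → ℝ) - obsProd A Ahat ξ t *ᵥ (v : Fin N → ℝ)))) i
            = ((stepMat A Ahat true * obsProd A Ahat ξ t) *ᵥ (v : Fin N → ℝ)) i
        show (A *ᵥ (obsProd A Ahat ξ t *ᵥ (v : Fin N → ℝ))) i -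
            ((0 : Fin N → ℝ) - Bm *ᵥ (C *ᵥ ((0 : Fin N → ℝ) - obsProd A Ahat ξ t *ᵥ (v : Fin N → ℝ)))) i
            = ((Ahat * obsProd A Ahat ξ t) *ᵥ (v : Fin N → ℝ)) i
        rw [zero_sub, zero_sub, Matrix.mulVec_neg, Matrix.mulVec_neg, hAhat,
          Matrix.sub_mul, Matrix.sub_mulVec]
        simp only [Pi.sub_apply, Pi.neg_apply, Matrix.mulVec_mulVec, Matrix.mul_assoc]
        ring
    rw [← hDeq]
    show HasFDerivAt (fun e0 => errSeqLin A C K 0 e0 ξ (t+1)) _ 0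
    exact htot

/-- Norm squared on Euclidean space is the dot product. -/
lemma euc_norm_sq (x : Euc N) : ‖x‖^2 = (x : Fin N → ℝ) ⬝ᵥ (x : Fin N → ℝ) := by
  rw [EuclideanSpace.norm_eq]
  rw [Real.sq_sqrt (by positivity)]
  simp [dotProduct, sq]

/-! ### The key limit bound -/

lemma keybound (A : Matrix (Fin N) (Fin N) ℝ) (C : Matrix (Fin M) (Fin N) ℝ)
    (K : Euc M → Euc N) (hK : ContDiff ℝ 1 K) (hK0 : K 0 = 0)
    (p L β : ℝ)
    (hMSE : ∀ (x0 e0 : Euc N) (t : ℕ),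
      erasureExp p t (fun ξ => ‖errSeqLin A C K x0 e0 ξ (t + 1)‖ ^ 2) ≤
        L * β ^ t * ‖e0‖ ^ 2)
    (t : ℕ) (v : Euc N) :
    ∑ s : Fin (t+1) → Bool, (∏ i, if s i then p else 1 - p) *
      ‖Matrix.toEuclideanLin (obsProd A
          (A - (Matrix.toEuclideanLin.symm ((fderiv ℝ K 0) : Euc M →ₗ[ℝ] Euc N)) * C)
          (fun n => if h : n < t + 1 then s ⟨n, h⟩ else false) (t+1)) v‖^2
    ≤ L * β ^ t * ‖v‖ ^ 2 := by
  set Ahat : Matrix (Fin N) (Fin N) ℝ :=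
    A - (Matrix.toEuclideanLin.symm ((fderiv ℝ K 0) : Euc M →ₗ[ℝ] Euc N)) * C with hAhat
  have hTend : Filter.Tendsto
      (fun ε : ℝ => ∑ s : Fin (t+1) → Bool, (∏ i, if s i then p else 1 - p) *
        ‖ε⁻¹ • errSeqLin A C K 0 (ε • v) (fun n => if h : n < t + 1 then s ⟨n, h⟩ else false) (t+1)‖^2)
      (nhdsWithin 0 {(0:ℝ)}ᶜ)
      (nhds (∑ s : Fin (t+1) → Bool, (∏ i, if s i then p else 1 - p) *
        ‖Matrix.toEuclideanLin (obsProd A Ahat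
          (fun n => if h : n < t + 1 then s ⟨n, h⟩ else false) (t+1)) v‖^2)) := by
    apply tendsto_finset_sum
    intro s _
    set ξs : ℕ → Bool := fun n => if h : n < t + 1 then s ⟨n, h⟩ else false with hξs
    have hFD := errSeqLin_hasFDerivAt A C K hK hK0 ξs (t+1)
    have hcurve : HasDerivAt (fun ε : ℝ => errSeqLin A C K 0 (ε • v) ξs (t+1))
        (Matrix.toEuclideanLin (obsProd A Ahat ξs (t+1)) v) 0 := by
      have h1 : HasDerivAt (fun ε : ℝ => ε • v) v 0 := by
        simpa using (hasDerivAt_id (0:ℝ)).smul_const v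
      have h2 : HasFDerivAt (fun e0 => errSeqLin A C K 0 e0 ξs (t+1))
          (LinearMap.toContinuousLinearMap (Matrix.toEuclideanLin (obsProd A Ahat ξs (t+1))))
          ((fun ε : ℝ => ε • v) 0) := by
        simpa using hFD
      have := h2.comp_hasDerivAt 0 h1
      exact this
    have hslope := hasDerivAt_iff_tendsto_slope.mp hcurve
    have hslope' : Filter.Tendsto
        (fun ε : ℝ => ε⁻¹ • errSeqLin A C K 0 (ε • v) ξs (t+1))
        (nhdsWithin 0 {(0:ℝ)}ᶜ)
        (nhds (Matrix.toEuclideanLin (obsProd A Ahat ξs (t+1)) v)) := by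
      apply hslope.congr
      intro ε
      rw [slope_def_module]
      rw [show errSeqLin A C K 0 ((0:ℝ) • v) ξs (t+1) = 0 by
        rw [zero_smul]; exact errSeqLin_zero A C K hK0 ξs (t+1)]
      rw [sub_zero, sub_zero]
    exact ((hslope'.norm).pow 2).const_mul _
  apply le_of_tendsto hTend
  filter_upwards [self_mem_nhdsWithin] with ε hε
  have hεne : ε ≠ 0 := hε
  have hb := hMSE 0 (ε • v) t
  rw [erasureExp] at hb
  have hsum : (∑ s : Fin (t+1) → Bool, (∏ i, if s i then p else 1 - p) *
      ‖ε⁻¹ • errSeqLin A C K 0 (ε • v) (fun n => if h : n < t + 1 then s ⟨n, h⟩ else false) (t+1)‖^2)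
      = (ε^2)⁻¹ * ∑ s : Fin (t+1) → Bool, (∏ i, if s i then p else 1 - p) *
        ‖errSeqLin A C K 0 (ε • v) (fun n => if h : n < t + 1 then s ⟨n, h⟩ else false) (t+1)‖^2 := by
    rw [Finset.mul_sum]
    apply Finset.sum_congr rfl
    intro s _
    rw [norm_smul, mul_pow, norm_inv, Real.norm_eq_abs, inv_pow, sq_abs]
    ring
  rw [hsum]
  have hnv : ‖ε • v‖^2 = ε^2 * ‖v‖^2 := by
    rw [norm_smul, mul_pow, Real.norm_eq_abs, sq_abs]
  calc (ε^2)⁻¹ * ∑ s : Fin (t+1) → Bool, (∏ i, if s i then p else 1 - p) *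
        ‖errSeqLin A C K 0 (ε • v) (fun n => if h : n < t + 1 then s ⟨n, h⟩ else false) (t+1)‖^2
      ≤ (ε^2)⁻¹ * (L * β ^ t * ‖ε • v‖ ^ 2) := by
        apply mul_le_mul_of_nonneg_left _ (by positivity)
        exact hb
    _ = L * β ^ t * ‖v‖ ^ 2 := by
        rw [hnv]
        field_simp

/-! ### Eigenvalue product and determinant -/

lemma abs_prod_aroots_eq (A : Matrix (Fin N) (Fin N) ℝ) :
    ((A.charpoly.aroots ℂ).map (fun z : ℂ => ‖z‖)).prod = |A.det| := by
  classical
  set Q : Polynomial ℂ := A.charpoly.map (algebraMap ℝ ℂ) with hQ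
  have hmonic : Q.Monic := A.charpoly_monic.map _
  have hsplits : Q.Splits := IsAlgClosed.splits Q
  have hcoeff : Q.coeff 0 = (-1) ^ Q.natDegree * Q.roots.prod :=
    hsplits.coeff_zero_eq_prod_roots_of_monic hmonic
  have haroots : A.charpoly.aroots ℂ = Q.roots := rfl
  rw [haroots]
  have h1 : (Q.roots.map (fun z : ℂ => ‖z‖)).prod = ‖Q.roots.prod‖ :=
    (map_multiset_prod (normHom : ℂ →*₀ ℝ) Q.roots).symm
  rw [h1]
  have h2 : ‖Q.roots.prod‖ = ‖Q.coeff 0‖ := by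
    rw [hcoeff, norm_mul, norm_pow]
    simp
  rw [h2]
  have hc0 : Q.coeff 0 = ((A.charpoly.coeff 0 : ℝ) : ℂ) := by
    rw [hQ, Polynomial.coeff_map]
    rfl
  rw [hc0, Complex.norm_real, Real.norm_eq_abs]
  have hdet : A.det = (-1) ^ (Fintype.card (Fin N)) * A.charpoly.coeff 0 :=
    A.det_eq_sign_charpoly_coeff
  rw [hdet]
  rw [abs_mul, abs_pow, abs_neg, abs_one, one_pow, one_mul]

/-! ### Main theorem -/

/-- **linear systems.** If all eigenvalues of `A` have absolute value greater
than one, `(A, C)` is observable, and some C¹ observer gain renders the observer error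
dynamics MSE stable over the Bernoulli(p) erasure channel, then
`(1−p)^M (det A)² < 1`, equivalently `(1−p)^M (∏_k |λ_k|)² < 1`. -/
theorem linear_mse_necessary_condition
    (hMN : M < N)
    (A : Matrix (Fin N) (Fin N) ℝ) (C : Matrix (Fin M) (Fin N) ℝ)
    (hEig : ∀ μ ∈ A.charpoly.aroots ℂ, 1 < ‖μ‖)
    (hObs : (Matrix.of fun (q : Fin N × Fin M) (j : Fin N) =>
        (C * A ^ (q.1 : ℕ)) q.2 j : Matrix (Fin N × Fin M) (Fin N) ℝ).rank = N)
    (p : ℝ) (hp0 : 0 < p) (hp1 : p < 1)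
    (hstable : ∃ (K : Euc M → Euc N), ContDiff ℝ 1 K ∧ K 0 = 0 ∧
      ∃ (L β : ℝ), 0 < β ∧ β < 1 ∧
        ∀ (x0 e0 : Euc N) (t : ℕ),
          erasureExp p t (fun ξ => ‖errSeqLin A C K x0 e0 ξ (t + 1)‖ ^ 2) ≤
            L * β ^ t * ‖e0‖ ^ 2) :
    (1 - p) ^ M * A.det ^ 2 < 1 ∧
    (1 - p) ^ M * (((A.charpoly.aroots ℂ).map (fun z : ℂ => ‖z‖)).prod) ^ 2 < 1 := by
  classical
  obtain ⟨K, hK, hK0, L, β, hβ0, hβ1, hMSE⟩ := hstable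
  -- A has nonzero determinant
  have hdetA : A.det ≠ 0 := by
    intro h0
    have hc0 : A.charpoly.coeff 0 = 0 := by
      have := A.det_eq_sign_charpoly_coeff
      rw [h0] at this
      have h1 : ((-1 : ℝ)) ^ (Fintype.card (Fin N)) ≠ 0 := by
        apply pow_ne_zero; norm_num
      field_simp at this
      exact (mul_eq_zero.mp this.symm).resolve_left h1
    have hQ0 : (A.charpoly.map (algebraMap ℝ ℂ)).coeff 0 = 0 := by
      rw [Polynomial.coeff_map, hc0, map_zero]
    have hmem : (0 : ℂ) ∈ A.charpoly.aroots ℂ := by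
      rw [Polynomial.mem_roots']
      constructor
      · exact (A.charpoly_monic.map (algebraMap ℝ ℂ)).ne_zero
      · show Polynomial.eval 0 _ = 0
        rw [← Polynomial.coeff_zero_eq_eval_zero]
        exact hQ0
    have h10 := hEig 0 hmem
    rw [norm_zero] at h10
    linarith
  have hAunit : IsUnit A.det := isUnit_iff_ne_zero.mpr hdetA
  set Bm : Matrix (Fin N) (Fin M) ℝ :=
    Matrix.toEuclideanLin.symm ((fderiv ℝ K 0) : Euc M →ₗ[ℝ] Euc N) with hBm
  set Ahat : Matrix (Fin N) (Fin N) ℝ := A - Bm * C with hAhat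
  set q : ℝ := 1 - p with hq
  have hq0 : 0 < q := by simp [hq]; linarith
  have hq1 : q ≤ 1 := by simp [hq]; linarith
  have hpq : p + q = 1 := by simp [hq]
  -- quadratic form bounds on obsS
  have hQbound : ∀ (t : ℕ) (v : Fin N → ℝ),
      v ⬝ᵥ (obsS A Ahat p (t+1) *ᵥ v) ≤ (L * β ^ t) * (v ⬝ᵥ v) := by
    intro t v
    have hkb := keybound A C K hK hK0 p L β hMSE t (WithLp.toLp 2 v)
    have h2 := euc_norm_sq (N := N) (WithLp.toLp 2 v)
    rw [h2] at hkb
    rw [← sumQ A Ahat p (t+1) v]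
    calc ∑ s : Fin (t+1) → Bool, (∏ i, if s i then p else 1 - p) *
          ((obsProd A Ahat (fun n => if h : n < t + 1 then s ⟨n, h⟩ else false) (t+1) *ᵥ v) ⬝ᵥ
           (obsProd A Ahat (fun n => if h : n < t + 1 then s ⟨n, h⟩ else false) (t+1) *ᵥ v))
        = ∑ s : Fin (t+1) → Bool, (∏ i, if s i then p else 1 - p) *
          ‖Matrix.toEuclideanLin (obsProd A Ahat
            (fun n => if h : n < t + 1 then s ⟨n, h⟩ else false) (t+1)) (WithLp.toLp 2 v)‖^2 := by
          apply Finset.sum_congr rfl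
          intro s _
          congr 1
          rw [euc_norm_sq]
          rfl
      _ ≤ (L * β ^ t) * (v ⬝ᵥ v) := by
          calc _ ≤ L * β ^ t * (v ⬝ᵥ v) := hkb
            _ = (L * β ^ t) * (v ⬝ᵥ v) := by ring
  have hQnonneg : ∀ (T : ℕ) (v : Fin N → ℝ), 0 ≤ v ⬝ᵥ (obsS A Ahat p T *ᵥ v) := by
    intro T v
    rw [← sumQ A Ahat p T v]
    apply Finset.sum_nonneg
    intro s _
    apply mul_nonneg
    · apply Finset.prod_nonneg
      intro i _
      by_cases h : s i <;> simp [h] <;> linarith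
    · exact dp_self_nonneg _
  -- lower bound on determinants
  set γ : ℝ := (1 - p) ^ M * A.det ^ 2 with hγ
  have hγ0 : 0 ≤ γ := by
    apply mul_nonneg
    · apply pow_nonneg; linarith
    · positivity
  have hdet_ge : ∀ T : ℕ, γ ^ T ≤ (obsS A Ahat p T).det := by
    intro T
    induction T with
    | zero => simp [obsS]
    | succ T ihT =>
      have hstep := det_step p q hp0.le hq0 hq1 hpq A hAunit Bm C (obsS A Ahat p T)
        (obsS_posdef A Ahat hp0.le hp1 hAunit T)
      calc γ ^ (T+1) = γ * γ ^ T := by ring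
        _ ≤ γ * (obsS A Ahat p T).det := by
            apply mul_le_mul_of_nonneg_left ihT hγ0
        _ = q ^ M * (A.det ^ 2 * (obsS A Ahat p T).det) := by
            rw [hγ, hq]; ring
        _ ≤ (p • ((A - Bm * C)ᵀ * (obsS A Ahat p T) * (A - Bm * C)) +
              q • (Aᵀ * (obsS A Ahat p T) * A)).det := hstep
        _ = (obsS A Ahat p (T+1)).det := by
            show _ = (p • (Ahatᵀ * obsS A Ahat p T * Ahat) + (1 - p) • (Aᵀ * obsS A Ahat p T * A)).det
            rw [hAhat, hq]
      -- upper bound on determinants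
  have hdet_le : ∀ t : ℕ, (obsS A Ahat p (t+1)).det ≤ (L * β ^ t) ^ N := by
    intro t
    exact det_le_of_qf (obsS_herm A Ahat p (t+1)) (hQnonneg (t+1)) (hQbound t)
  -- conclusion: γ < 1
  have hNne : N ≠ 0 := by omega
  have hγlt : γ < 1 := by
    by_contra hge
    push_neg at hge
    have hchain : ∀ t : ℕ, (1:ℝ) ≤ L ^ N * (β ^ N) ^ t := by
      intro t
      have h1 : (1:ℝ) ≤ γ ^ (t+1) := one_le_pow₀ hge
      have h2 : γ ^ (t+1) ≤ (L * β ^ t) ^ N := le_trans (hdet_ge (t+1)) (hdet_le t)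
      have h3 : (L * β ^ t) ^ N = L ^ N * (β ^ N) ^ t := by
        rw [mul_pow, ← pow_mul, ← pow_mul, Nat.mul_comm]
      linarith [h3 ▸ h2]
    have hβN0 : (0:ℝ) ≤ β ^ N := by positivity
    have hβN1 : β ^ N < 1 := pow_lt_one₀ hβ0.le hβ1 hNne
    have htend : Filter.Tendsto (fun t : ℕ => L ^ N * (β ^ N) ^ t) Filter.atTop (nhds 0) := by
      have := tendsto_pow_atTop_nhds_zero_of_lt_one hβN0 hβN1
      simpa using this.const_mul (L ^ N)
    have hev : ∀ᶠ t : ℕ in Filter.atTop, L ^ N * (β ^ N) ^ t < 1 :=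
      htend.eventually_lt_const (by norm_num)
    obtain ⟨t, ht⟩ := (hev.and (Filter.Eventually.of_forall hchain)).exists
    linarith [ht.1, ht.2]
  constructor
  · exact hγlt
  · have habs := abs_prod_aroots_eq A
    rw [habs]
    rw [sq_abs]
    exact hγlt

end
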